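/- (Existence of the point-free radonification.) Let B be a Boolean algebra and μ₀ : B → ℝ≥0∞ an additive function with values in [0,1]. Then there exist an abstract σ-algebra B̃, a measure μ̃ on B̃, and a Boolean algebra homomorphism β : B → B̃ such that: μ̃ (β a) = μ₀ a for all a ∈ B; μ̃ is reduced, i.e. μ̃ x = 0 implies x = ⊥; and B̃ is generated by the image of β, i.e. the only subset of B̃ that contains the image of β, is closed under complements, and contains a least upper bound of each of its ℕ-indexed families, is all of B̃. -/

import Mathlib

open scoped ENNReal

/-- An abstract σ-algebra: a Boolean algebra in which every `ℕ`-indexed family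
has a least upper bound. -/
def IsAbstractSigmaAlgebra (A : Type*) [BooleanAlgebra A] : Prop :=
  ∀ a : ℕ → A, ∃ s, IsLUB (Set.range a) s

/-- A homomorphism of Boolean algebras. -/
def IsBoolHom {A B : Type*} [BooleanAlgebra A] [BooleanAlgebra B] (f : A → B) : Prop :=
  f ⊥ = ⊥ ∧ f ⊤ = ⊤ ∧ (∀ a b, f (a ⊓ b) = f a ⊓ f b) ∧
    (∀ a b, f (a ⊔ b) = f a ⊔ f b) ∧ ∀ a, f aᶜ = (f a)ᶜ

/-- A σ-morphism of abstract σ-algebras: a Boolean homomorphism sending least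
upper bounds of `ℕ`-indexed families to least upper bounds. -/
def IsSigmaMorphism {A B : Type*} [BooleanAlgebra A] [BooleanAlgebra B] (f : A → B) : Prop :=
  IsBoolHom f ∧ ∀ (a : ℕ → A) (s : A), IsLUB (Set.range a) s →
    IsLUB (Set.range fun n => f (a n)) (f s)

/-- A measure on an abstract σ-algebra. -/
def IsMeasureOn {A : Type*} [BooleanAlgebra A] (μ : A → ℝ≥0∞) : Prop :=
  μ ⊥ = 0 ∧ ∀ a : ℕ → A, (∀ i j, i ≠ j → a i ⊓ a j = ⊥) →
    ∀ s, IsLUB (Set.range a) s → μ s = ∑' n, μ (a n)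

universe u

/-- A point-free radonification of an additive `[0,1]`-valued function `μ₀` on a
Boolean algebra `B`: a reduced abstract σ-algebra with measure, generated by a
Boolean-homomorphic image of `B` on which the measure restricts to `μ₀`. -/
structure Radonification (B : Type u) [BooleanAlgebra B] (μ₀ : B → ℝ≥0∞) :
    Type (u + 1) where
  Bt : Type u
  [inst : BooleanAlgebra Bt]
  sigma : IsAbstractSigmaAlgebra Bt
  μt : Bt → ℝ≥0∞
  meas : IsMeasureOn μt
  β : B → Bt
  hom : IsBoolHom β
  compat : ∀ a : B, μt (β a) = μ₀ a
  reduced : ∀ x : Bt, μt x = 0 → x = ⊥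
  generated : ∀ S : Set Bt, Set.range β ⊆ S → (∀ x ∈ S, xᶜ ∈ S) →
    (∀ a : ℕ → Bt, (∀ n, a n ∈ S) → ∀ s : Bt, IsLUB (Set.range a) s → s ∈ S) →
    S = Set.univ

namespace RadonAux

open Set MeasureTheory

section MAlg

variable {α : Type*} [MeasurableSpace α]

/-- Measurable subsets of `α`. -/
abbrev MS (α : Type*) [MeasurableSpace α] : Type _ := {E : Set α // MeasurableSet E}

variable (ν : OuterMeasure α)

def ple (E F : MS α) : Prop := ν (E.1 \ F.1) = 0

lemma ple_of_subset {E F : MS α} (h : E.1 ⊆ F.1) : ple ν E F := by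
  have : E.1 \ F.1 = ∅ := diff_eq_empty.2 h
  simp [ple, this]

lemma ple_refl (E : MS α) : ple ν E E := ple_of_subset ν (le_refl _)

lemma ple_trans {E F G : MS α} (h1 : ple ν E F) (h2 : ple ν F G) : ple ν E G := by
  have hsub : E.1 \ G.1 ⊆ (E.1 \ F.1) ∪ (F.1 \ G.1) := by
    intro x hx; by_cases hF : x ∈ F.1
    · exact Or.inr ⟨hF, hx.2⟩
    · exact Or.inl ⟨hx.1, hF⟩
  exact measure_mono_null hsub (measure_union_null h1 h2)

def nullSetoid : Setoid (MS α) where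
  r E F := ple ν E F ∧ ple ν F E
  iseqv := ⟨fun E => ⟨ple_refl ν E, ple_refl ν E⟩, fun h => ⟨h.2, h.1⟩,
    fun h1 h2 => ⟨ple_trans ν h1.1 h2.1, ple_trans ν h2.2 h1.2⟩⟩

/-- The measure algebra: measurable sets modulo `ν`-null sets. -/
def MAlg : Type _ := Quotient (nullSetoid ν)

abbrev mk (E : MS α) : MAlg ν := Quotient.mk _ E

lemma mk_surjective : Function.Surjective (mk ν) := Quotient.exists_rep

lemma mk_eq_mk {E F : MS α} : mk ν E = mk ν F ↔ ple ν E F ∧ ple ν F E :=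
  ⟨fun h => Quotient.exact h, fun h => Quotient.sound h⟩

variable {ν}

instance : LE (MAlg ν) :=
  ⟨Quotient.lift₂ (ple ν) (by
    rintro E F E' F' ⟨h1, h1'⟩ ⟨h2, h2'⟩
    exact propext ⟨fun h => ple_trans ν h1' (ple_trans ν h h2),
      fun h => ple_trans ν h1 (ple_trans ν h h2')⟩)⟩

lemma mk_le_mk {E F : MS α} : mk ν E ≤ mk ν F ↔ ple ν E F := Iff.rfl

instance : Max (MAlg ν) :=
  ⟨Quotient.map₂ (fun E F => ⟨E.1 ∪ F.1, E.2.union F.2⟩) (by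
    rintro E E' ⟨h1, h1'⟩ F F' ⟨h2, h2'⟩
    constructor
    · refine measure_mono_null (fun x hx => ?_) (measure_union_null h1 h2)
      rcases hx.1 with h | h
      · exact Or.inl ⟨h, fun hc => hx.2 (Or.inl hc)⟩
      · exact Or.inr ⟨h, fun hc => hx.2 (Or.inr hc)⟩
    · refine measure_mono_null (fun x hx => ?_) (measure_union_null h1' h2')
      rcases hx.1 with h | h
      · exact Or.inl ⟨h, fun hc => hx.2 (Or.inl hc)⟩
      · exact Or.inr ⟨h, fun hc => hx.2 (Or.inr hc)⟩)⟩

instance : Min (MAlg ν) :=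
  ⟨Quotient.map₂ (fun E F => ⟨E.1 ∩ F.1, E.2.inter F.2⟩) (by
    rintro E E' ⟨h1, h1'⟩ F F' ⟨h2, h2'⟩
    constructor
    · refine measure_mono_null (fun x hx => ?_) (measure_union_null h1 h2)
      by_cases hE : x ∈ E'.1
      · exact Or.inr ⟨hx.1.2, fun hc => hx.2 ⟨hE, hc⟩⟩
      · exact Or.inl ⟨hx.1.1, hE⟩
    · refine measure_mono_null (fun x hx => ?_) (measure_union_null h1' h2')
      by_cases hE : x ∈ E.1
      · exact Or.inr ⟨hx.1.2, fun hc => hx.2 ⟨hE, hc⟩⟩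
      · exact Or.inl ⟨hx.1.1, hE⟩)⟩

instance : Compl (MAlg ν) :=
  ⟨Quotient.map (fun E => ⟨E.1ᶜ, E.2.compl⟩) (by
    rintro E F ⟨h1, h2⟩
    constructor
    · refine measure_mono_null (fun x hx => ?_) h2
      exact ⟨by simpa using hx.2, hx.1⟩
    · refine measure_mono_null (fun x hx => ?_) h1
      exact ⟨by simpa using hx.2, hx.1⟩)⟩

instance : Bot (MAlg ν) := ⟨mk ν ⟨∅, MeasurableSet.empty⟩⟩
instance : Top (MAlg ν) := ⟨mk ν ⟨univ, MeasurableSet.univ⟩⟩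

lemma mk_sup_mk (E F : MS α) : mk ν E ⊔ mk ν F = mk ν ⟨E.1 ∪ F.1, E.2.union F.2⟩ := rfl
lemma mk_inf_mk (E F : MS α) : mk ν E ⊓ mk ν F = mk ν ⟨E.1 ∩ F.1, E.2.inter F.2⟩ := rfl
lemma mk_compl (E : MS α) : (mk ν E)ᶜ = mk ν ⟨E.1ᶜ, E.2.compl⟩ := rfl
lemma bot_def : (⊥ : MAlg ν) = mk ν ⟨∅, MeasurableSet.empty⟩ := rfl
lemma top_def : (⊤ : MAlg ν) = mk ν ⟨univ, MeasurableSet.univ⟩ := rfl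

lemma ple_sup_le {E F G : MS α} (h1 : ple ν E G) (h2 : ple ν F G) :
    ple ν ⟨E.1 ∪ F.1, E.2.union F.2⟩ G := by
  refine measure_mono_null (fun x hx => ?_) (measure_union_null h1 h2)
  rcases hx.1 with h | h
  · exact Or.inl ⟨h, hx.2⟩
  · exact Or.inr ⟨h, hx.2⟩

lemma ple_le_inf {E F G : MS α} (h1 : ple ν E F) (h2 : ple ν E G) :
    ple ν E ⟨F.1 ∩ G.1, F.2.inter G.2⟩ := by
  refine measure_mono_null (fun x hx => ?_) (measure_union_null h1 h2)
  by_cases hF : x ∈ F.1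
  · exact Or.inr ⟨hx.1, fun hc => hx.2 ⟨hF, hc⟩⟩
  · exact Or.inl ⟨hx.1, hF⟩

lemma ple_distrib (E F G : MS α) :
    ple ν ⟨(E.1 ∪ F.1) ∩ (E.1 ∪ G.1), ((E.2.union F.2).inter (E.2.union G.2))⟩
      ⟨E.1 ∪ F.1 ∩ G.1, E.2.union (F.2.inter G.2)⟩ :=
  ple_of_subset ν (by
    intro x hx
    simp only [Set.mem_inter_iff, Set.mem_union] at hx ⊢
    tauto)

lemma ple_inf_compl (E : MS α) :
    ple ν ⟨E.1 ∩ E.1ᶜ, E.2.inter E.2.compl⟩ ⟨∅, MeasurableSet.empty⟩ :=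
  ple_of_subset ν (by
    intro x hx
    exact absurd hx.1 hx.2)

lemma ple_top_compl (E : MS α) :
    ple ν ⟨univ, MeasurableSet.univ⟩ ⟨E.1 ∪ E.1ᶜ, E.2.union E.2.compl⟩ :=
  ple_of_subset ν (by
    intro x _
    simp only [Set.mem_union, Set.mem_compl_iff]
    tauto)

instance : BooleanAlgebra (MAlg ν) where
  le := (· ≤ ·)
  sup := (· ⊔ ·)
  inf := (· ⊓ ·)
  compl := (·ᶜ)
  top := ⊤
  bot := ⊥
  le_refl x := Quotient.inductionOn x fun E => ple_refl ν E
  le_trans x y z := Quotient.inductionOn₃ x y z fun E F G h1 h2 => ple_trans ν h1 h2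
  le_antisymm x y := Quotient.inductionOn₂ x y fun E F h1 h2 => Quotient.sound ⟨h1, h2⟩
  le_sup_left x y := Quotient.inductionOn₂ x y fun E F =>
    ple_of_subset ν (subset_union_left (s := E.1) (t := F.1))
  le_sup_right x y := Quotient.inductionOn₂ x y fun E F =>
    ple_of_subset ν (subset_union_right (s := E.1) (t := F.1))
  sup_le x y z := Quotient.inductionOn₃ x y z fun E F G h1 h2 => ple_sup_le h1 h2
  inf_le_left x y := Quotient.inductionOn₂ x y fun E F =>
    ple_of_subset ν (inter_subset_left (s := E.1) (t := F.1))
  inf_le_right x y := Quotient.inductionOn₂ x y fun E F =>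
    ple_of_subset ν (inter_subset_right (s := E.1) (t := F.1))
  le_inf x y z := Quotient.inductionOn₃ x y z fun E F G h1 h2 => ple_le_inf h1 h2
  le_sup_inf x y z := Quotient.inductionOn₃ x y z fun E F G => ple_distrib E F G
  inf_compl_le_bot x := Quotient.inductionOn x fun E => ple_inf_compl E
  top_le_sup_compl x := Quotient.inductionOn x fun E => ple_top_compl E
  le_top x := Quotient.inductionOn x fun E => ple_of_subset ν (subset_univ _)
  bot_le x := Quotient.inductionOn x fun E => ple_of_subset ν (empty_subset _)
  sdiff_eq _ _ := rfl
  himp_eq _ _ := rfl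

variable (ν) in
/-- The induced function on the measure algebra. -/
def νq : MAlg ν → ℝ≥0∞ :=
  Quotient.lift (fun E : MS α => ν E.1) (by
    rintro E F ⟨h1, h2⟩
    refine le_antisymm ?_ ?_
    · calc ν E.1 ≤ ν (F.1 ∪ (E.1 \ F.1)) := measure_mono (by intro x hx; by_cases h : x ∈ F.1 <;> simp [h, hx])
        _ ≤ ν F.1 + ν (E.1 \ F.1) := measure_union_le _ _
        _ = ν F.1 := by rw [h1, add_zero]
    · calc ν F.1 ≤ ν (E.1 ∪ (F.1 \ E.1)) := measure_mono (by intro x hx; by_cases h : x ∈ E.1 <;> simp [h, hx])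
        _ ≤ ν E.1 + ν (F.1 \ E.1) := measure_union_le _ _
        _ = ν E.1 := by rw [h2, add_zero])

lemma νq_mk (E : MS α) : νq ν (mk ν E) = ν E.1 := rfl

lemma νq_bot : νq ν (⊥ : MAlg ν) = 0 := by
  show ν ∅ = 0; exact measure_empty

lemma reduced_νq (x : MAlg ν) (hx : νq ν x = 0) : x = ⊥ :=
  Quotient.inductionOn x (fun E hE => Quotient.sound
    ⟨measure_mono_null diff_subset hE, ple_of_subset ν (empty_subset _)⟩) hx

/-- The class of a countable union is the least upper bound of the classes. -/
lemma isLUB_mk_iUnion (E : ℕ → MS α) :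
    IsLUB (Set.range fun n => mk ν (E n))
      (mk ν ⟨⋃ n, (E n).1, MeasurableSet.iUnion fun n => (E n).2⟩) := by
  constructor
  · rintro _ ⟨n, rfl⟩
    exact ple_of_subset ν (subset_iUnion (fun n => (E n).1) n)
  · intro x hx
    refine Quotient.inductionOn x (fun F hF => ?_) hx
    show ple ν _ _
    have : (⋃ n, (E n).1) \ F.1 = ⋃ n, ((E n).1 \ F.1) := iUnion_diff _ _
    rw [ple, this]
    exact measure_iUnion_null_iff.2 fun n => hF ⟨n, rfl⟩

lemma sigma_mAlg : IsAbstractSigmaAlgebra (MAlg ν) := by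
  intro a
  set E : ℕ → MS α := fun n => (a n).out with hE
  have ha : ∀ n, mk ν (E n) = a n := fun n => Quotient.out_eq (a n)
  refine ⟨mk ν ⟨⋃ n, (E n).1, MeasurableSet.iUnion fun n => (E n).2⟩, ?_⟩
  have := isLUB_mk_iUnion (ν := ν) E
  rwa [show (fun n => mk ν (E n)) = a from funext ha] at this

/-- Countable additivity of `νq` when the σ-algebra is Carathéodory-measurable. -/
lemma isMeasureOn_νq (hle : ‹MeasurableSpace α› ≤ ν.caratheodory) :
    IsMeasureOn (νq ν) := by
  refine ⟨νq_bot, ?_⟩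
  intro a hdisj s hs
  set E : ℕ → MS α := fun n => (a n).out with hEdef
  have ha : ∀ n, mk ν (E n) = a n := fun n => Quotient.out_eq (a n)
  -- null pairwise intersections
  have hnull : ∀ i j, i ≠ j → ν ((E i).1 ∩ (E j).1) = 0 := by
    intro i j hij
    have h := hdisj i j hij
    rw [← ha i, ← ha j] at h; erw [mk_inf_mk, bot_def] at h
    have := (mk_eq_mk (ν := ν)).1 h
    simpa [ple] using this.1
  -- disjointified sets
  set D : ℕ → Set α := fun n => (E n).1 \ ⋃ (m : ℕ) (_ : m < n), (E m).1 with hDdef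
  have hDmeas : ∀ n, MeasurableSet (D n) := fun n =>
    (E n).2.diff (MeasurableSet.iUnion fun m => MeasurableSet.iUnion fun _ => (E m).2)
  have hDsub : ∀ n, D n ⊆ (E n).1 := fun n => diff_subset
  have hDdisj : Pairwise (Function.onFun Disjoint D) := by
    have key : ∀ i j, i < j → Disjoint (D i) (D j) := by
      intro i j hij
      rw [Set.disjoint_left]
      intro x hxi hxj
      exact hxj.2 (mem_iUnion.2 ⟨i, mem_iUnion.2 ⟨hij, hDsub i hxi⟩⟩)
    intro i j hij
    rcases lt_or_gt_of_ne hij with h | h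
    · exact key i j h
    · exact (key j i h).symm
  have hUnion : (⋃ n, D n) = ⋃ n, (E n).1 := by
    apply Subset.antisymm (iUnion_mono hDsub)
    intro x hx
    have hex : ∃ n, x ∈ (E n).1 := mem_iUnion.1 hx
    classical
    refine mem_iUnion.2 ⟨Nat.find hex, Nat.find_spec hex, ?_⟩
    intro hc
    obtain ⟨m, hm⟩ := mem_iUnion.1 hc
    obtain ⟨hmlt, hxm⟩ := mem_iUnion.1 hm
    exact Nat.find_min hex hmlt hxm
  have hEDnull : ∀ n, ν ((E n).1 \ D n) = 0 := by
    intro n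
    refine measure_mono_null (fun x hx => ?_)
      (measure_iUnion_null_iff.2 fun m : ℕ =>
        measure_iUnion_null_iff.2 fun hm : m < n => hnull m n (Nat.ne_of_lt hm))
    have hxE : x ∈ (E n).1 := hx.1
    have : x ∈ ⋃ (m : ℕ) (_ : m < n), (E m).1 := by
      by_contra hc
      exact hx.2 ⟨hxE, hc⟩
    obtain ⟨m, hm⟩ := mem_iUnion.1 this
    obtain ⟨hmlt, hxm⟩ := mem_iUnion.1 hm
    exact mem_iUnion.2 ⟨m, mem_iUnion.2 ⟨hmlt, hxm, hxE⟩⟩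
  have hED : ∀ n, ν ((E n).1) = ν (D n) := by
    intro n
    refine le_antisymm ?_ (measure_mono (hDsub n))
    calc ν (E n).1 ≤ ν (D n ∪ ((E n).1 \ D n)) := measure_mono (by
          intro x hx; by_cases h : x ∈ D n <;> simp [h, hx])
      _ ≤ ν (D n) + ν ((E n).1 \ D n) := measure_union_le _ _
      _ = ν (D n) := by rw [hEDnull n, add_zero]
  -- identify s
  have hsEq : s = mk ν ⟨⋃ n, (E n).1, MeasurableSet.iUnion fun n => (E n).2⟩ := by
    have h1 := isLUB_mk_iUnion (ν := ν) E
    rw [show (fun n => mk ν (E n)) = a from funext ha] at h1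
    exact hs.unique h1
  -- compute with the actual measure
  set μ : Measure α := ν.toMeasure hle with hμdef
  have hμ : ∀ s : Set α, MeasurableSet s → μ s = ν s := fun s h =>
    MeasureTheory.toMeasure_apply ν hle h
  calc νq ν s = ν (⋃ n, (E n).1) := by rw [hsEq, νq_mk]
    _ = ν (⋃ n, D n) := by rw [hUnion]
    _ = μ (⋃ n, D n) := (hμ _ (MeasurableSet.iUnion hDmeas)).symm
    _ = ∑' n, μ (D n) := measure_iUnion hDdisj hDmeas
    _ = ∑' n, ν (D n) := by exact tsum_congr fun n => hμ _ (hDmeas n)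
    _ = ∑' n, ν ((E n).1) := tsum_congr fun n => (hED n).symm
    _ = ∑' n, νq ν (a n) := tsum_congr fun n => by rw [← ha n, νq_mk]

/-- Generation: a subset containing the classes of a generating family, closed under
complements and countable LUBs, is everything. -/
lemma generated_mAlg (G : Set (Set α))
    (hgen : ‹MeasurableSpace α› ≤ MeasurableSpace.generateFrom G)
    (S : Set (MAlg ν))
    (hbot : (⊥ : MAlg ν) ∈ S)
    (hG : ∀ E ∈ G, ∃ h : MeasurableSet E, mk ν ⟨E, h⟩ ∈ S)
    (hcompl : ∀ x ∈ S, xᶜ ∈ S)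
    (hsup : ∀ a : ℕ → MAlg ν, (∀ n, a n ∈ S) → ∀ s : MAlg ν, IsLUB (Set.range a) s → s ∈ S) :
    S = Set.univ := by
  set m' : MeasurableSpace α :=
    { MeasurableSet' := fun E => ∃ h : MeasurableSet E, mk ν ⟨E, h⟩ ∈ S
      measurableSet_empty := ⟨MeasurableSet.empty, hbot⟩
      measurableSet_compl := by
        rintro E ⟨hE, hS⟩
        exact ⟨hE.compl, hcompl _ hS⟩
      measurableSet_iUnion := by
        intro f hf
        classical
        choose hmeas hS using hf
        refine ⟨MeasurableSet.iUnion hmeas, ?_⟩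
        exact hsup (fun n => mk ν ⟨f n, hmeas n⟩) hS _
          (isLUB_mk_iUnion (ν := ν) fun n => ⟨f n, hmeas n⟩) } with hm'def
  have hle' : MeasurableSpace.generateFrom G ≤ m' := by
    apply MeasurableSpace.generateFrom_le
    intro E hE
    exact hG E hE
  rw [Set.eq_univ_iff_forall]
  intro x
  refine Quotient.inductionOn x fun E => ?_
  obtain ⟨h, hS⟩ := (hgen.trans hle') E.1 E.2
  exact hS

end MAlg

section Stone

variable {B : Type u} [BooleanAlgebra B]

/-- Points of the Stone-like space: finitely-additive 2-valued "homomorphisms". -/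
def IsPoint (f : B → Bool) : Prop :=
  f ⊤ = true ∧ (∀ a b : B, f (a ⊓ b) = (f a && f b)) ∧ (∀ a : B, f aᶜ = !(f a))

def X (B : Type u) [BooleanAlgebra B] : Type u := {f : B → Bool // IsPoint f}

lemma IsPoint.bot {f : B → Bool} (hf : IsPoint f) : f ⊥ = false := by
  have := hf.2.2 ⊤
  rw [compl_top] at this
  rw [this, hf.1]
  rfl

lemma IsPoint.sup {f : B → Bool} (hf : IsPoint f) (a b : B) :
    f (a ⊔ b) = (f a || f b) := by
  have h1 : a ⊔ b = (aᶜ ⊓ bᶜ)ᶜ := by rw [compl_inf, compl_compl, compl_compl]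
  rw [h1, hf.2.2, hf.2.1, hf.2.2, hf.2.2]
  cases f a <;> cases f b <;> rfl

/-- The basic (cl)open sets of the Stone-like space. -/
def hat (a : B) : Set (X B) := {f | f.1 a = true}

lemma hat_top : hat (⊤ : B) = Set.univ := by
  ext f; simp [hat, f.2.1]

lemma hat_bot : hat (⊥ : B) = ∅ := by
  ext f; simp [hat, f.2.bot]

lemma hat_inf (a b : B) : hat (a ⊓ b) = hat a ∩ hat b := by
  ext f
  simp only [hat, Set.mem_setOf_eq, Set.mem_inter_iff, f.2.2.1]
  cases f.1 a <;> cases f.1 b <;> simp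

lemma hat_compl (a : B) : hat (aᶜ) = (hat a)ᶜ := by
  ext f
  simp only [hat, Set.mem_setOf_eq, Set.mem_compl_iff, f.2.2.2]
  cases f.1 a <;> simp

lemma hat_sup (a b : B) : hat (a ⊔ b) = hat a ∪ hat b := by
  ext f
  simp only [hat, Set.mem_setOf_eq, Set.mem_union, f.2.sup]
  cases f.1 a <;> cases f.1 b <;> simp

lemma hat_sdiff (a b : B) : hat (a \ b) = hat a \ hat b := by
  rw [sdiff_eq (x := a), hat_inf, hat_compl]; rfl

/-- Boolean prime ideal theorem: every nonzero element is in some point. -/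
lemma exists_point {a : B} (ha : a ≠ ⊥) : ∃ f : X B, f.1 a = true := by
  classical
  have hdisj : Disjoint ((Order.PFilter.principal a : Order.PFilter B) : Set B)
      ((Order.Ideal.principal (⊥ : B) : Order.Ideal B) : Set B) := by
    rw [Set.disjoint_left]
    intro x hx hx'
    have h1 : a ≤ x := hx
    have h2 : x ≤ ⊥ := hx'
    exact ha (le_bot_iff.1 (h1.trans h2))
  obtain ⟨J, hJprime, -, hJdisj⟩ :=
    DistribLattice.prime_ideal_of_disjoint_filter_ideal hdisj
  have haJ : a ∉ J := fun h => Set.disjoint_left.1 hJdisj (le_refl a) h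
  refine ⟨⟨fun x => if x ∈ J then false else true, ?_, ?_, ?_⟩, by simp [haJ]⟩
  · simp [hJprime.toIsProper.top_notMem]
  · intro x y
    by_cases hx : x ∈ J <;> by_cases hy : y ∈ J
    · have hxy : x ⊓ y ∈ J := J.lower inf_le_left hx
      simp [hx, hy, hxy]
    · have hxy : x ⊓ y ∈ J := J.lower inf_le_left hx
      simp [hx, hy, hxy]
    · have hxy : x ⊓ y ∈ J := J.lower inf_le_right hy
      simp [hx, hy, hxy]
    · have h2 : x ⊓ y ∉ J := fun h => by rcases hJprime.mem_or_mem h with h | h <;> tauto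
      simp [hx, hy, h2]
  · intro x
    by_cases hx : x ∈ J
    · have h2 : xᶜ ∉ J := fun h => (hJprime.toIsProper.notMem_of_compl_mem h) hx
      simp [hx, h2]
    · simp [hx, hJprime.compl_mem_of_notMem hx]

lemma hat_subset_iff_le {a b : B} : hat a ⊆ hat b ↔ a ≤ b := by
  constructor
  · intro h
    by_contra hab
    have : a \ b ≠ ⊥ := fun hc => hab (sdiff_eq_bot_iff.1 hc)
    obtain ⟨f, hf⟩ := exists_point this
    have : f ∈ hat (a \ b) := hf
    rw [hat_sdiff] at this
    exact this.2 (h this.1)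
  · intro hab f hf
    have h2 := f.2.2.1 a b
    rw [inf_eq_left.2 hab] at h2
    show f.1 b = true
    have hfa : f.1 a = true := hf
    rw [hfa] at h2
    simpa using h2.symm

lemma hat_injective : Function.Injective (hat (B := B)) := fun a b h =>
  le_antisymm (hat_subset_iff_le.1 h.le) (hat_subset_iff_le.1 h.ge)

instance : TopologicalSpace (X B) :=
  inferInstanceAs (TopologicalSpace {f : B → Bool // IsPoint f})

instance : CompactSpace (X B) := by
  have hclosed : IsClosed {f : B → Bool | IsPoint f} := by
    have h1 : {f : B → Bool | IsPoint f} =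
        ({f : B → Bool | f ⊤ = true} ∩
          ((⋂ (a : B), ⋂ (b : B), {f : B → Bool | f (a ⊓ b) = (f a && f b)}) ∩
            ⋂ (a : B), {f : B → Bool | f aᶜ = !(f a)})) := by
      ext f
      simp only [Set.mem_setOf_eq, Set.mem_inter_iff, Set.mem_iInter, IsPoint]
    rw [h1]
    refine IsClosed.inter (isClosed_eq (continuous_apply _) continuous_const)
      (IsClosed.inter (isClosed_iInter fun a => isClosed_iInter fun b => ?_)
        (isClosed_iInter fun a => ?_))
    · refine isClosed_eq (continuous_apply _) ?_
      have hc : Continuous fun p : Bool × Bool => p.1 && p.2 :=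
        continuous_of_discreteTopology
      have hd : Continuous fun f : B → Bool => (f a, f b) :=
        (continuous_apply a).prodMk (continuous_apply b)
      exact hc.comp hd
    · refine isClosed_eq (continuous_apply _) ?_
      have hc : Continuous fun x : Bool => !x := continuous_of_discreteTopology
      exact hc.comp (continuous_apply a)
  exact isCompact_iff_compactSpace.1 hclosed.isCompact

lemma isClopen_hat (a : B) : IsClopen (hat a) := by
  have : hat a = (fun f : X B => f.1 a) ⁻¹' {true} := rfl
  rw [this]
  exact (isClopen_discrete {true}).preimage ((continuous_apply a).comp continuous_subtype_val)

end Stone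

section Premeasure

variable {B : Type u} [BooleanAlgebra B]
variable (μ₀ : B → ℝ≥0∞) (h0 : μ₀ ⊥ = 0)
variable (hadd : ∀ a b : B, a ⊓ b = ⊥ → μ₀ (a ⊔ b) = μ₀ a + μ₀ b)

section mu0
include hadd

lemma mu0_mono {a b : B} (hab : a ≤ b) : μ₀ a ≤ μ₀ b := by
  have h1 : a ⊓ (b \ a) = ⊥ := (disjoint_sdiff_self_left.symm).eq_bot
  have h2 : a ⊔ (b \ a) = b := sup_sdiff_cancel_right hab
  calc μ₀ a ≤ μ₀ a + μ₀ (b \ a) := le_self_add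
    _ = μ₀ (a ⊔ (b \ a)) := (hadd _ _ h1).symm
    _ = μ₀ b := by rw [h2]

lemma mu0_sup_le (a b : B) : μ₀ (a ⊔ b) ≤ μ₀ a + μ₀ b := by
  have h1 : a ⊓ (b \ a) = ⊥ := (disjoint_sdiff_self_left.symm).eq_bot
  have h2 : a ⊔ (b \ a) = a ⊔ b := (sup_sdiff_self_right a b)
  calc μ₀ (a ⊔ b) = μ₀ (a ⊔ (b \ a)) := by rw [h2]
    _ = μ₀ a + μ₀ (b \ a) := hadd _ _ h1
    _ ≤ μ₀ a + μ₀ b := add_le_add_right (mu0_mono μ₀ hadd sdiff_le) _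

include h0 in
lemma mu0_finsetSup_le (t : Finset ℕ) (b : ℕ → B) :
    μ₀ (t.sup b) ≤ ∑ n ∈ t, μ₀ (b n) := by
  classical
  induction t using Finset.induction_on with
  | empty => simp [h0]
  | insert _ _ hn ih =>
    rename_i n t
    rw [Finset.sup_insert, Finset.sum_insert hn]
    exact (mu0_sup_le μ₀ hadd _ _).trans (add_le_add_right ih _)

end mu0

lemma hat_finsetSup (t : Finset ℕ) (b : ℕ → B) :
    hat (t.sup b) = ⋃ n ∈ t, hat (b n) := by
  classical
  induction t using Finset.induction_on with
  | empty => simp [hat_bot]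
  | insert _ _ hn ih =>
    rename_i n t
    rw [Finset.sup_insert, hat_sup, ih]
    simp

include h0 hadd in
/-- The key compactness estimate: countable covers of `hat a` control `μ₀ a`. -/
lemma mu0_cover {a : B} {b : ℕ → B} (h : hat a ⊆ ⋃ n, hat (b n)) :
    μ₀ a ≤ ∑' n, μ₀ (b n) := by
  obtain ⟨t, ht⟩ := ((isClopen_hat a).isClosed.isCompact).elim_finite_subcover
    (fun n => hat (b n)) (fun n => (isClopen_hat (b n)).isOpen) h
  rw [← hat_finsetSup] at ht
  have hle : a ≤ t.sup b := hat_subset_iff_le.1 ht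
  calc μ₀ a ≤ μ₀ (t.sup b) := mu0_mono μ₀ hadd hle
    _ ≤ ∑ n ∈ t, μ₀ (b n) := mu0_finsetSup_le μ₀ h0 hadd t b
    _ ≤ ∑' n, μ₀ (b n) := ENNReal.sum_le_tsum t

/-- The pre-measure on basic sets. -/
noncomputable def preM : Set (X B) → ℝ≥0∞ :=
  Function.extend hat μ₀ (fun _ => (⊤ : ℝ≥0∞))

lemma preM_hat (a : B) : preM μ₀ (hat a) = μ₀ a :=
  hat_injective.extend_apply _ _ _

include h0 in
lemma preM_empty : preM μ₀ ∅ = 0 := by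
  rw [← hat_bot (B := B), preM_hat]; exact h0

variable (B) in
/-- The Carathéodory outer measure. -/
noncomputable def stoneOM : OuterMeasure (X B) :=
  MeasureTheory.OuterMeasure.ofFunction (preM μ₀) (preM_empty μ₀ h0)

include hadd in
lemma stoneOM_hat (a : B) : stoneOM B μ₀ h0 (hat a) = μ₀ a := by
  refine le_antisymm
    ((MeasureTheory.OuterMeasure.ofFunction_le _).trans (preM_hat μ₀ a).le) ?_
  rw [stoneOM, MeasureTheory.OuterMeasure.ofFunction_apply]
  refine le_iInf fun t => le_iInf fun ht => ?_
  by_cases hc : ∀ n, ∃ bn : B, hat bn = t n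
  · choose b hb using hc
    have hcov : hat a ⊆ ⋃ n, hat (b n) := by
      rw [show (⋃ n, hat (b n)) = ⋃ n, t n from iUnion_congr hb]
      exact ht
    calc μ₀ a ≤ ∑' n, μ₀ (b n) := mu0_cover μ₀ h0 hadd hcov
      _ = ∑' n, preM μ₀ (t n) := tsum_congr fun n => by rw [← hb n, preM_hat]
  · push_neg at hc
    obtain ⟨n, hn⟩ := hc
    have htop : preM μ₀ (t n) = ⊤ :=
      Function.extend_apply' _ _ _ (by simpa using fun b hb => hn b hb)
    calc μ₀ a ≤ ⊤ := le_top
      _ = preM μ₀ (t n) := htop.symm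
      _ ≤ ∑' n, preM μ₀ (t n) := ENNReal.le_tsum n

include hadd in
lemma stoneOM_caratheodory (a : B) :
    MeasurableSet[(stoneOM B μ₀ h0).caratheodory] (hat a) := by
  refine MeasureTheory.OuterMeasure.ofFunction_caratheodory fun t => ?_
  by_cases hc : ∃ b : B, hat b = t
  · obtain ⟨b, rfl⟩ := hc
    have h1 : hat b ∩ hat a = hat (b ⊓ a) := (hat_inf b a).symm
    have h2 : hat b \ hat a = hat (b \ a) := (hat_sdiff b a).symm
    rw [h1, h2, preM_hat, preM_hat, preM_hat, ← hadd _ _ (inf_inf_sdiff b a),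
      sup_inf_sdiff]
  · have htop : preM μ₀ t = ⊤ :=
      Function.extend_apply' _ _ _ (by simpa using fun b hb => hc ⟨b, hb⟩)
    rw [htop]
    exact le_top

end Premeasure

instance instMS {B : Type u} [BooleanAlgebra B] : MeasurableSpace (X B) :=
  MeasurableSpace.generateFrom (Set.range (hat (B := B)))

lemma measurable_hat {B : Type u} [BooleanAlgebra B] (a : B) :
    MeasurableSet (hat a) :=
  MeasurableSpace.measurableSet_generateFrom ⟨a, rfl⟩

lemma stone_le_caratheodory {B : Type u} [BooleanAlgebra B] (μ₀ : B → ℝ≥0∞)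
    (h0 : μ₀ ⊥ = 0) (hadd : ∀ a b : B, a ⊓ b = ⊥ → μ₀ (a ⊔ b) = μ₀ a + μ₀ b) :
    instMS ≤ (stoneOM B μ₀ h0).caratheodory := by
  apply MeasurableSpace.generateFrom_le
  rintro _ ⟨a, rfl⟩
  exact stoneOM_caratheodory μ₀ h0 hadd a

end RadonAux

/-- Existence of the point-free radonification: every additive `[0,1]`-valued
function on a Boolean algebra extends to a reduced measure on an abstract
σ-algebra generated by the image of the Boolean algebra. -/
theorem radonification_exists {B : Type u} [BooleanAlgebra B]
    (μ₀ : B → ℝ≥0∞) (h0 : μ₀ ⊥ = 0) (h1 : μ₀ ⊤ ≤ 1)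
    (hadd : ∀ a b : B, a ⊓ b = ⊥ → μ₀ (a ⊔ b) = μ₀ a + μ₀ b) :
    Nonempty (Radonification B μ₀) := by
  classical
  set ν := RadonAux.stoneOM B μ₀ h0 with hν
  set β : B → RadonAux.MAlg ν := fun a =>
    RadonAux.mk ν ⟨RadonAux.hat a, RadonAux.measurable_hat a⟩ with hβ
  have hombot : β ⊥ = ⊥ := congrArg _ (Subtype.ext RadonAux.hat_bot)
  refine ⟨{
      Bt := RadonAux.MAlg ν
      inst := inferInstance
      sigma := RadonAux.sigma_mAlg
      μt := RadonAux.νq ν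
      meas := RadonAux.isMeasureOn_νq (RadonAux.stone_le_caratheodory μ₀ h0 hadd)
      β := β
      hom := ⟨hombot, congrArg _ (Subtype.ext RadonAux.hat_top),
        fun a b => congrArg _ (Subtype.ext (RadonAux.hat_inf a b)),
        fun a b => congrArg _ (Subtype.ext (RadonAux.hat_sup a b)),
        fun a => congrArg _ (Subtype.ext (RadonAux.hat_compl a))⟩
      compat := fun a => RadonAux.stoneOM_hat μ₀ h0 hadd a
      reduced := fun x h => RadonAux.reduced_νq x h
      generated := ?_ }⟩
  intro S hrange hcompl hsup
  refine RadonAux.generated_mAlg (Set.range (RadonAux.hat (B := B))) le_rfl S ?_ ?_ hcompl hsup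
  · rw [← hombot]
    exact hrange ⟨⊥, rfl⟩
  · rintro _ ⟨a, rfl⟩
    exact ⟨RadonAux.measurable_hat a, hrange ⟨a, rfl⟩⟩
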